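/- Let -λ be the largest eigenvalue of A = Γ - Φ acting on mean mode powers, and let -μ be the largest eigenvalue of Θ - Ψ governing the second moments, where Ψ S_{jl} = (Λ_j + Λ_l) S_{jl}. Then μ ≤ 2λ (equivalently, the exponential growth rate 2λ - μ of the relative intensity fluctuations is nonnegative). -/

import Mathlib

open Matrix Finset

/-- The second-moment coupling operator `Θ` acting on symmetric arrays. -/
def Theta {N : ℕ} (Γ : Matrix (Fin N) (Fin N) ℝ) (S : Fin N → Fin N → ℝ) :
    Fin N → Fin N → ℝ :=
  fun j l =>
    (if j ≠ l then 2 * Γ j l * (S j j + S l l - 2 * S j l) else 0)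
      + ∑ n ∈ (Finset.univ.erase j).erase l,
          (Γ l n * (S j n - S j l) + Γ j n * (S n l - S j l))

/-- The diagonal dissipation operator `(Ψ S)_{jl} = (Λ_j + Λ_l) S_{jl}`. -/
def Psi {N : ℕ} (Λ : Fin N → ℝ) (S : Fin N → Fin N → ℝ) : Fin N → Fin N → ℝ :=
  fun j l => (Λ j + Λ l) * S j l

/-! ### Auxiliary spectral lemmas -/

open RealInnerProductSpace in
lemma aux_parseval {E : Type*} [NormedAddCommGroup E] [InnerProductSpace ℝ E]
    [FiniteDimensional ℝ E] {n : ℕ} (b : OrthonormalBasis (Fin n) ℝ E) (x y : E) :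
    ⟪x, y⟫ = ∑ i, b.repr x i * b.repr y i := by
  rw [← b.repr.inner_map_map x y, PiLp.inner_apply]
  simp [RCLike.inner_apply]
  exact Finset.sum_congr rfl fun i _ => mul_comm _ _

open RealInnerProductSpace in
lemma aux_rayleigh_le {E : Type*} [NormedAddCommGroup E] [InnerProductSpace ℝ E]
    [FiniteDimensional ℝ E] (T : E →ₗ[ℝ] E) (hT : T.IsSymmetric) (c : ℝ)
    (htop : ∀ (r : ℝ) (v : E), v ≠ 0 → T v = r • v → r ≤ c) (x : E) :
    ⟪x, T x⟫ ≤ c * ⟪x, x⟫ := by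
  set n := Module.finrank ℝ E with hnn
  have hn : Module.finrank ℝ E = n := rfl
  set b := hT.eigenvectorBasis hn with hb
  have hev : ∀ i, hT.eigenvalues hn i ≤ c := fun i =>
    htop _ _ (hT.hasEigenvector_eigenvectorBasis hn i).2
      (by simpa using hT.apply_eigenvectorBasis hn i)
  have h1 : ⟪x, T x⟫ = ∑ i, hT.eigenvalues hn i * (b.repr x i)^2 := by
    rw [aux_parseval b]
    refine Finset.sum_congr rfl fun i _ => ?_
    rw [hb, hT.eigenvectorBasis_apply_self_apply hn x i]
    simp only [RCLike.ofReal_real_eq_id, id]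
    ring
  have h2 : ⟪x, x⟫ = ∑ i, (b.repr x i)^2 := by
    rw [aux_parseval b]; exact Finset.sum_congr rfl fun i _ => (sq _).symm
  rw [h1, h2, Finset.mul_sum]
  exact Finset.sum_le_sum fun i _ => mul_le_mul_of_nonneg_right (hev i) (sq_nonneg _)

open RealInnerProductSpace in
lemma aux_rayleigh_eq {E : Type*} [NormedAddCommGroup E] [InnerProductSpace ℝ E]
    [FiniteDimensional ℝ E] (T : E →ₗ[ℝ] E) (hT : T.IsSymmetric) (c : ℝ)
    (htop : ∀ (r : ℝ) (v : E), v ≠ 0 → T v = r • v → r ≤ c) (x : E)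
    (heq : ⟪x, T x⟫ = c * ⟪x, x⟫) : T x = c • x := by
  set n := Module.finrank ℝ E with hnn
  have hn : Module.finrank ℝ E = n := rfl
  set b := hT.eigenvectorBasis hn with hb
  have hev : ∀ i, hT.eigenvalues hn i ≤ c := fun i =>
    htop _ _ (hT.hasEigenvector_eigenvectorBasis hn i).2
      (by simpa using hT.apply_eigenvectorBasis hn i)
  have h1 : ⟪x, T x⟫ = ∑ i, hT.eigenvalues hn i * (b.repr x i)^2 := by
    rw [aux_parseval b]
    refine Finset.sum_congr rfl fun i _ => ?_
    rw [hb, hT.eigenvectorBasis_apply_self_apply hn x i]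
    simp only [RCLike.ofReal_real_eq_id, id]
    ring
  have h2 : ⟪x, x⟫ = ∑ i, (b.repr x i)^2 := by
    rw [aux_parseval b]; exact Finset.sum_congr rfl fun i _ => (sq _).symm
  have h3 : ∑ i, (c - hT.eigenvalues hn i) * (b.repr x i)^2 = 0 := by
    have hh := heq
    rw [h1, h2, Finset.mul_sum] at hh
    rw [Finset.sum_congr rfl (fun i _ => by ring :
      ∀ i ∈ Finset.univ, (c - hT.eigenvalues hn i) * (b.repr x i)^2
        = c * (b.repr x i)^2 - hT.eigenvalues hn i * (b.repr x i)^2),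
      Finset.sum_sub_distrib, hh]
    ring
  have h4 : ∀ i, (c - hT.eigenvalues hn i) * (b.repr x i)^2 = 0 := by
    have hh := (Finset.sum_eq_zero_iff_of_nonneg (fun i _ =>
      mul_nonneg (by linarith [hev i]) (sq_nonneg _))).mp h3
    exact fun i => hh i (Finset.mem_univ i)
  apply b.repr.injective
  ext i
  rw [hT.eigenvectorBasis_apply_self_apply hn x i]
  have h5 : hT.eigenvalues hn i * b.repr x i = c * b.repr x i := by
    rcases mul_eq_zero.mp (h4 i) with h | h
    · nlinarith [h4 i]
    · rw [pow_eq_zero_iff (by norm_num : 2 ≠ 0)] at h; rw [h]; ring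
  rw [_root_.map_smul]; exact h5

/-! ### Auxiliary facts about `Theta` -/

section ThetaFacts

variable {N : ℕ} {Γ : Matrix (Fin N) (Fin N) ℝ}

lemma theta_formula (hsym : Γ.IsSymm) (S : Fin N → Fin N → ℝ) (j l : Fin N) :
    Theta Γ S j l =
      (∑ n, (Γ l n * (S j n - S j l) + Γ j n * (S n l - S j l)))
        + Γ j l * (S j j + S l l - 2 * S j l) := by
  have hlj : Γ l j = Γ j l := hsym.apply j l
  by_cases h : j = l
  · subst h
    simp only [Theta, ne_eq, not_true_eq_false, if_false, Finset.erase_idem]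
    rw [← Finset.sum_erase_add _ _ (Finset.mem_univ j)]
    ring
  · simp only [Theta, ne_eq, h, not_false_iff, if_true]
    have hl : l ∈ Finset.univ.erase j := by
      simp [Finset.mem_erase, Ne.symm h]
    rw [← Finset.sum_erase_add _ _ (Finset.mem_univ j),
        ← Finset.sum_erase_add _ _ hl, hlj]
    ring

lemma theta_formula2 (hsym : Γ.IsSymm) (hrow0 : ∀ j, ∑ n, Γ j n = 0)
    (S : Fin N → Fin N → ℝ) (j l : Fin N) :
    Theta Γ S j l =
      (∑ n, Γ l n * S j n) + (∑ n, Γ j n * S n l)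
        + Γ j l * (S j j + S l l - 2 * S j l) := by
  rw [theta_formula hsym]
  have e1 : ∑ n, (Γ l n * (S j n - S j l) + Γ j n * (S n l - S j l))
      = ((∑ n, Γ l n * S j n) + (∑ n, Γ j n * S n l))
        - S j l * (∑ n, Γ l n) - S j l * (∑ n, Γ j n) := by
    rw [Finset.mul_sum, Finset.mul_sum, ← Finset.sum_add_distrib,
        ← Finset.sum_sub_distrib, ← Finset.sum_sub_distrib]
    exact Finset.sum_congr rfl fun n _ => by ring
  rw [e1, hrow0 j, hrow0 l]
  ring

lemma theta_linear (hsym : Γ.IsSymm) (a b : ℝ) (S T : Fin N → Fin N → ℝ) (j l : Fin N) :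
    Theta Γ (fun m n => a * S m n + b * T m n) j l
      = a * Theta Γ S j l + b * Theta Γ T j l := by
  rw [theta_formula hsym, theta_formula hsym, theta_formula hsym]
  have e1 : ∀ n ∈ Finset.univ, (Γ l n * ((a * S j n + b * T j n) - (a * S j l + b * T j l))
      + Γ j n * ((a * S n l + b * T n l) - (a * S j l + b * T j l)))
      = a * (Γ l n * (S j n - S j l) + Γ j n * (S n l - S j l))
        + b * (Γ l n * (T j n - T j l) + Γ j n * (T n l - T j l)) := fun n _ => by ring
  rw [Finset.sum_congr rfl e1, Finset.sum_add_distrib, ← Finset.mul_sum, ← Finset.mul_sum]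
  ring

lemma theta_symm (hsym : Γ.IsSymm) (S : Fin N → Fin N → ℝ)
    (hS : ∀ j l, S j l = S l j) (j l : Fin N) :
    Theta Γ S l j = Theta Γ S j l := by
  rw [theta_formula hsym, theta_formula hsym]
  have e1 : ∀ n ∈ Finset.univ, (Γ j n * (S l n - S l j) + Γ l n * (S n j - S l j))
      = (Γ l n * (S j n - S j l) + Γ j n * (S n l - S j l)) := fun n _ => by
    rw [hS l n, hS l j, hS n j]; ring
  rw [Finset.sum_congr rfl e1, hsym.apply j l, hS l j]
  ring

lemma weight_split (X : Fin N → Fin N → ℝ) :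
    ∑ j, ∑ l, (if j = l then (2:ℝ) else 1) * X j l
      = (∑ j, ∑ l, X j l) + ∑ j, X j j := by
  have h : ∀ j, ∑ l, (if j = l then (2:ℝ) else 1) * X j l
      = (∑ l, X j l) + X j j := by
    intro j
    have e : ∀ l ∈ Finset.univ, (if j = l then (2:ℝ) else 1) * X j l
        = X j l + (if j = l then X j l else 0) := by
      intro l _; split_ifs <;> ring
    rw [Finset.sum_congr rfl e, Finset.sum_add_distrib, Finset.sum_ite_eq]
    simp
  rw [Finset.sum_congr rfl fun j _ => h j, Finset.sum_add_distrib]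

lemma expand_pair (hsym : Γ.IsSymm) (hrow0 : ∀ j, ∑ n, Γ j n = 0)
    (S T : Fin N → Fin N → ℝ) (hS : ∀ j l, S j l = S l j) (hT : ∀ j l, T j l = T l j) :
    ∑ j, ∑ l, (if j = l then (2:ℝ) else 1) * (T j l * Theta Γ S j l)
      = 2 * (∑ j, ∑ l, ∑ n, T j l * (Γ l n * S j n))
        + 2 * (∑ j, ∑ n, T j j * (Γ j n * S j n))
        + 2 * (∑ j, ∑ l, Γ j l * T j l * S j j)
        - 2 * (∑ j, ∑ l, Γ j l * T j l * S j l) := by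
  rw [weight_split (fun j l => T j l * Theta Γ S j l)]
  have h1 : ∀ j l, T j l * Theta Γ S j l
      = (∑ n, T j l * (Γ l n * S j n)) + (∑ n, T j l * (Γ j n * S n l))
        + Γ j l * T j l * (S j j + S l l) - 2 * (Γ j l * T j l * S j l) := by
    intro j l
    rw [theta_formula2 hsym hrow0, mul_add, mul_add, Finset.mul_sum, Finset.mul_sum]
    ring
  have h2 : ∑ j, ∑ l, T j l * Theta Γ S j l
      = (∑ j, ∑ l, ∑ n, T j l * (Γ l n * S j n))
        + (∑ j, ∑ l, ∑ n, T j l * (Γ j n * S n l))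
        + (∑ j, ∑ l, Γ j l * T j l * (S j j + S l l))
        - (∑ j, ∑ l, 2 * (Γ j l * T j l * S j l)) := by
    rw [← Finset.sum_add_distrib, ← Finset.sum_add_distrib, ← Finset.sum_sub_distrib]
    refine Finset.sum_congr rfl fun j _ => ?_
    rw [← Finset.sum_add_distrib, ← Finset.sum_add_distrib, ← Finset.sum_sub_distrib]
    exact Finset.sum_congr rfl fun l _ => h1 j l
  have hB : ∑ j, ∑ l, ∑ n, T j l * (Γ j n * S n l)
      = ∑ j, ∑ l, ∑ n, T j l * (Γ l n * S j n) := by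
    rw [Finset.sum_comm]
    refine Finset.sum_congr rfl fun a _ => Finset.sum_congr rfl fun b _ =>
      Finset.sum_congr rfl fun n _ => ?_
    rw [hT b a, hS n a]
  have hC : ∑ j, ∑ l, Γ j l * T j l * (S j j + S l l)
      = 2 * ∑ j, ∑ l, Γ j l * T j l * S j j := by
    have e : ∀ j, ∀ l, Γ j l * T j l * (S j j + S l l)
        = Γ j l * T j l * S j j + Γ j l * T j l * S l l := fun j l => by ring
    rw [Finset.sum_congr rfl fun j _ => Finset.sum_congr rfl fun l _ => e j l]
    rw [Finset.sum_congr rfl fun j _ => Finset.sum_add_distrib, Finset.sum_add_distrib]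
    have e2 : ∑ j, ∑ l, Γ j l * T j l * S l l = ∑ j, ∑ l, Γ j l * T j l * S j j := by
      rw [Finset.sum_comm]
      refine Finset.sum_congr rfl fun a _ => Finset.sum_congr rfl fun b _ => ?_
      rw [hsym.apply a b, hT b a]
    rw [e2]; ring
  have hD : ∀ j, T j j * Theta Γ S j j = 2 * ∑ n, T j j * (Γ j n * S j n) := by
    intro j
    rw [theta_formula2 hsym hrow0]
    have e : ∑ n, Γ j n * S n j = ∑ n, Γ j n * S j n :=
      Finset.sum_congr rfl fun n _ => by rw [hS n j]
    rw [e]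
    conv_rhs => rw [← Finset.mul_sum]
    ring
  have h3 : ∑ j, T j j * Theta Γ S j j = 2 * ∑ j, ∑ n, T j j * (Γ j n * S j n) := by
    rw [Finset.sum_congr rfl fun j _ => hD j, ← Finset.mul_sum]
  rw [h2, hB, hC, h3]
  have h4 : ∑ j, ∑ l, 2 * (Γ j l * T j l * S j l)
      = 2 * ∑ j, ∑ l, Γ j l * T j l * S j l := by
    rw [Finset.mul_sum]
    exact Finset.sum_congr rfl fun j _ => by rw [Finset.mul_sum]
  rw [h4]
  ring

lemma key_pair (hsym : Γ.IsSymm) (hrow0 : ∀ j, ∑ n, Γ j n = 0)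
    (S T : Fin N → Fin N → ℝ) (hS : ∀ j l, S j l = S l j) (hT : ∀ j l, T j l = T l j) :
    ∑ j, ∑ l, (if j = l then (2:ℝ) else 1) * (T j l * Theta Γ S j l)
      = ∑ j, ∑ l, (if j = l then (2:ℝ) else 1) * (S j l * Theta Γ T j l) := by
  rw [expand_pair hsym hrow0 S T hS hT, expand_pair hsym hrow0 T S hT hS]
  have hA : ∑ j, ∑ l, ∑ n, T j l * (Γ l n * S j n)
      = ∑ j, ∑ l, ∑ n, S j l * (Γ l n * T j n) := by
    refine Finset.sum_congr rfl fun j _ => ?_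
    rw [Finset.sum_comm]
    refine Finset.sum_congr rfl fun a _ => Finset.sum_congr rfl fun b _ => ?_
    rw [hsym.apply a b]; ring
  have hE : ∑ j, ∑ n, T j j * (Γ j n * S j n) = ∑ j, ∑ l, Γ j l * S j l * T j j :=
    Finset.sum_congr rfl fun j _ => Finset.sum_congr rfl fun n _ => by ring
  have hE' : ∑ j, ∑ n, S j j * (Γ j n * T j n) = ∑ j, ∑ l, Γ j l * T j l * S j j :=
    Finset.sum_congr rfl fun j _ => Finset.sum_congr rfl fun n _ => by ring
  have hD : ∑ j, ∑ l, Γ j l * T j l * S j l = ∑ j, ∑ l, Γ j l * S j l * T j l :=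
    Finset.sum_congr rfl fun j _ => Finset.sum_congr rfl fun n _ => by ring
  rw [hA, hE, hE', hD]
  ring

lemma supersol (hsym : Γ.IsSymm) (hrow0 : ∀ j, ∑ n, Γ j n = 0)
    (Λ : Fin N → ℝ) (lam : ℝ) (w : Fin N → ℝ)
    (hw : ∀ j, ∑ n, Γ j n * w n = Λ j * w j - lam * w j)
    (S : Fin N → Fin N → ℝ) (hSd : ∀ m n, S m n = w m * w n) (j l : Fin N) :
    Theta Γ S j l - Psi Λ S j l
      = -(2*lam) * (w j * w l) + Γ j l * (w j - w l)^2 := by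
  rw [theta_formula2 hsym hrow0]
  have e1 : ∑ n, Γ l n * S j n = w j * (Λ l * w l - lam * w l) := by
    rw [← hw l, Finset.mul_sum]
    exact Finset.sum_congr rfl fun n _ => by rw [hSd]; ring
  have e2 : ∑ n, Γ j n * S n l = w l * (Λ j * w j - lam * w j) := by
    rw [← hw j, Finset.mul_sum]
    exact Finset.sum_congr rfl fun n _ => by rw [hSd]; ring
  simp only [Psi]
  rw [e1, e2, hSd j j, hSd l l, hSd j l]
  ring

lemma opB_linear (hsym : Γ.IsSymm) (Λ : Fin N → ℝ) (a b : ℝ)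
    (S T : Fin N → Fin N → ℝ) (j l : Fin N) :
    Theta Γ (fun m n => a * S m n + b * T m n) j l
        - Psi Λ (fun m n => a * S m n + b * T m n) j l
      = a * (Theta Γ S j l - Psi Λ S j l) + b * (Theta Γ T j l - Psi Λ T j l) := by
  rw [theta_linear hsym]
  simp only [Psi]
  ring

lemma opB_symm (hsym : Γ.IsSymm) (Λ : Fin N → ℝ) (S : Fin N → Fin N → ℝ)
    (hS : ∀ j l, S j l = S l j) (j l : Fin N) :
    Theta Γ S l j - Psi Λ S l j = Theta Γ S j l - Psi Λ S j l := by
  rw [theta_symm hsym S hS j l]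
  simp only [Psi]
  rw [hS l j]
  ring

lemma key_opB (hsym : Γ.IsSymm) (hrow0 : ∀ j, ∑ n, Γ j n = 0) (Λ : Fin N → ℝ)
    (S T : Fin N → Fin N → ℝ) (hS : ∀ j l, S j l = S l j) (hT : ∀ j l, T j l = T l j) :
    ∑ j, ∑ l, (if j = l then (2:ℝ) else 1) * (T j l * (Theta Γ S j l - Psi Λ S j l))
      = ∑ j, ∑ l, (if j = l then (2:ℝ) else 1) * (S j l * (Theta Γ T j l - Psi Λ T j l)) := by
  have e : ∀ (U V : Fin N → Fin N → ℝ),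
      ∑ j, ∑ l, (if j = l then (2:ℝ) else 1) * (V j l * (Theta Γ U j l - Psi Λ U j l))
        = (∑ j, ∑ l, (if j = l then (2:ℝ) else 1) * (V j l * Theta Γ U j l))
          - ∑ j, ∑ l, (if j = l then (2:ℝ) else 1) * ((Λ j + Λ l) * (V j l * U j l)) := by
    intro U V
    rw [← Finset.sum_sub_distrib]
    refine Finset.sum_congr rfl fun j _ => ?_
    rw [← Finset.sum_sub_distrib]
    refine Finset.sum_congr rfl fun l _ => ?_
    simp only [Psi]
    ring
  rw [e S T, e T S, key_pair hsym hrow0 S T hS hT]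
  congr 1
  exact Finset.sum_congr rfl fun j _ => Finset.sum_congr rfl fun l _ => by ring

lemma pair_symm (X : Fin N → Fin N → ℝ) (hX : ∀ j l, X j l = X l j)
    (z : Fin N × Fin N → ℝ) :
    ∑ j, ∑ l, X j l * z (j, l) = ∑ j, ∑ l, X j l * ((z (j, l) + z (l, j)) / 2) := by
  have hswap : ∑ j, ∑ l, X j l * z (l, j) = ∑ j, ∑ l, X j l * z (j, l) := by
    rw [Finset.sum_comm]
    exact Finset.sum_congr rfl fun a _ => Finset.sum_congr rfl fun b _ => by rw [hX b a]
  have e : ∀ j l, X j l * ((z (j, l) + z (l, j)) / 2)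
      = (1/2) * (X j l * z (j, l)) + (1/2) * (X j l * z (l, j)) := fun j l => by ring
  rw [Finset.sum_congr rfl fun j _ => Finset.sum_congr rfl fun l _ => e j l]
  rw [Finset.sum_congr rfl fun j _ => Finset.sum_add_distrib, Finset.sum_add_distrib]
  rw [Finset.sum_congr rfl fun j _ => (Finset.mul_sum _ _ _).symm, ← Finset.mul_sum,
      Finset.sum_congr rfl fun j _ => (Finset.mul_sum _ _ _).symm, ← Finset.mul_sum, hswap]
  ring

lemma cross_sym (y z : Fin N × Fin N → ℝ) :
    ∑ j, ∑ l, ((y (j, l) + y (l, j)) / 2) * z (j, l)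
      = ∑ j, ∑ l, y (j, l) * ((z (j, l) + z (l, j)) / 2) := by
  have hswap : ∑ j, ∑ l, y (l, j) * z (j, l) = ∑ j, ∑ l, y (j, l) * z (l, j) := by
    rw [Finset.sum_comm]
  have e1 : ∀ j l, ((y (j, l) + y (l, j)) / 2) * z (j, l)
      = (1/2) * (y (j, l) * z (j, l)) + (1/2) * (y (l, j) * z (j, l)) := fun j l => by ring
  have e2 : ∀ j l, y (j, l) * ((z (j, l) + z (l, j)) / 2)
      = (1/2) * (y (j, l) * z (j, l)) + (1/2) * (y (j, l) * z (l, j)) := fun j l => by ring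
  rw [Finset.sum_congr rfl fun j _ => Finset.sum_congr rfl fun l _ => e1 j l,
      Finset.sum_congr rfl fun j _ => Finset.sum_congr rfl fun l _ => e2 j l]
  rw [Finset.sum_congr rfl fun j _ => Finset.sum_add_distrib, Finset.sum_add_distrib,
      Finset.sum_congr rfl fun j _ => Finset.sum_add_distrib, Finset.sum_add_distrib]
  congr 1
  rw [Finset.sum_congr rfl fun j _ => (Finset.mul_sum _ _ _).symm, ← Finset.mul_sum,
      Finset.sum_congr rfl fun j _ => (Finset.mul_sum _ _ _).symm, ← Finset.mul_sum,
      hswap]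

lemma split3 (F G H : Fin N → Fin N → ℝ) (c : ℝ) :
    ∑ j, ∑ l, (F j l + c * (G j l - H j l))
      = (∑ j, ∑ l, F j l) + c * ((∑ j, ∑ l, G j l) - ∑ j, ∑ l, H j l) := by
  rw [Finset.sum_congr rfl fun j _ => Finset.sum_add_distrib, Finset.sum_add_distrib]
  congr 1
  rw [Finset.sum_congr rfl fun j _ => (Finset.mul_sum _ _ _).symm, ← Finset.mul_sum]
  congr 1
  rw [Finset.sum_congr rfl fun j _ => Finset.sum_sub_distrib _ _, Finset.sum_sub_distrib]

end ThetaFacts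

open RealInnerProductSpace in
/-- if `-λ` is the largest eigenvalue of `A = Γ - Φ` and `-μ` is
the largest eigenvalue of `Θ - Ψ` (acting on symmetric arrays), then `μ ≤ 2λ`. -/
theorem stmt9 {N : ℕ} (hN : 1 ≤ N) (Γ : Matrix (Fin N) (Fin N) ℝ)
    (hsym : Γ.IsSymm)
    (hoff : ∀ j l : Fin N, j ≠ l → 0 ≤ Γ j l)
    (hrow : ∀ j : Fin N, Γ j j = -∑ l ∈ Finset.univ.erase j, Γ j l)
    (hirr : ∀ j l : Fin N, Relation.ReflTransGen (fun a b => 0 < Γ a b) j l)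
    (Λ : Fin N → ℝ) (hΛ : ∀ j, 0 ≤ Λ j)
    (lam : ℝ)
    (hlam_eig : ∃ v : Fin N → ℝ, v ≠ 0 ∧
      (Γ - Matrix.diagonal Λ).mulVec v = (-lam) • v)
    (hlam_top : ∀ μ' : ℝ,
      (∃ v : Fin N → ℝ, v ≠ 0 ∧ (Γ - Matrix.diagonal Λ).mulVec v = μ' • v) →
      μ' ≤ -lam)
    (mu : ℝ)
    (hmu_eig : ∃ S : Fin N → Fin N → ℝ, S ≠ 0 ∧ (∀ j l, S j l = S l j) ∧
      (fun j l => Theta Γ S j l - Psi Λ S j l) = fun j l => (-mu) * S j l)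
    (hmu_top : ∀ μ' : ℝ,
      (∃ S : Fin N → Fin N → ℝ, S ≠ 0 ∧ (∀ j l, S j l = S l j) ∧
        (fun j l => Theta Γ S j l - Psi Λ S j l) = fun j l => μ' * S j l) →
      μ' ≤ -mu) :
    mu ≤ 2 * lam := by
  classical
  have hrow0 : ∀ j, ∑ n, Γ j n = 0 := by
    intro j
    rw [← Finset.sum_erase_add _ _ (Finset.mem_univ j), hrow j]
    ring
  obtain ⟨v, hv0, hAv⟩ := hlam_eig
  set A := Γ - Matrix.diagonal Λ with hAdef
  have hAapp : ∀ j n, A j n = Γ j n - (if j = n then Λ j else 0) := by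
    intro j n
    rw [hAdef, Matrix.sub_apply, Matrix.diagonal_apply]
  have hAsym : ∀ a b, A a b = A b a := by
    intro a b
    rw [hAapp, hAapp, hsym.apply a b]
    by_cases h : a = b
    · subst h; simp
    · simp [h, Ne.symm h]
  -- the operator T1 on EuclideanSpace
  set T1 : EuclideanSpace ℝ (Fin N) →ₗ[ℝ] EuclideanSpace ℝ (Fin N) :=
    { toFun := fun u => WithLp.toLp 2 (A.mulVec u)
      map_add' := fun u u' => PiLp.ext fun j => by
        show ∑ n, A j n * (u n + u' n) = (∑ n, A j n * u n) + ∑ n, A j n * u' n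
        rw [← Finset.sum_add_distrib]
        exact Finset.sum_congr rfl fun n _ => by ring
      map_smul' := fun c u => PiLp.ext fun j => by
        show ∑ n, A j n * (c * u n) = c * ∑ n, A j n * u n
        rw [Finset.mul_sum]
        exact Finset.sum_congr rfl fun n _ => by ring } with hT1def
  have hT1app : ∀ (u : EuclideanSpace ℝ (Fin N)) j, T1 u j = ∑ n, A j n * u n :=
    fun u j => rfl
  have inner_form : ∀ u z : EuclideanSpace ℝ (Fin N),
      ⟪u, T1 z⟫ = ∑ j, ∑ n, u j * (A j n * z n) := by
    intro u z
    rw [PiLp.inner_apply]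
    simp only [RCLike.inner_apply, conj_trivial]
    refine Finset.sum_congr rfl fun j _ => ?_
    rw [hT1app, Finset.sum_mul]
    exact Finset.sum_congr rfl fun n _ => by ring
  have hinner : ∀ u z : EuclideanSpace ℝ (Fin N), ⟪u, z⟫ = ∑ j, u j * z j := by
    intro u z
    rw [PiLp.inner_apply]
    simp only [RCLike.inner_apply, conj_trivial]
    exact Finset.sum_congr rfl fun j _ => mul_comm _ _
  have hT1sym : T1.IsSymmetric := by
    intro u z
    have h1 : ⟪T1 u, z⟫ = ∑ j, ∑ n, (A j n * u n) * z j := by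
      rw [hinner]
      refine Finset.sum_congr rfl fun j _ => ?_
      rw [hT1app, Finset.sum_mul]
    rw [h1, inner_form, Finset.sum_comm]
    refine Finset.sum_congr rfl fun a _ => Finset.sum_congr rfl fun b _ => ?_
    rw [hAsym b a]; ring
  have htop1 : ∀ (r : ℝ) (u : EuclideanSpace ℝ (Fin N)), u ≠ 0 → T1 u = r • u → r ≤ -lam := by
    intro r u hu hequ
    exact hlam_top r ⟨u.ofLp, fun h => hu (PiLp.ext fun j => congrFun h j),
      congrArg (fun t : EuclideanSpace ℝ (Fin N) => t.ofLp) hequ⟩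
  -- the nonnegative eigenvector w
  set v' : EuclideanSpace ℝ (Fin N) := WithLp.toLp 2 v with hv'def
  set w : EuclideanSpace ℝ (Fin N) := WithLp.toLp 2 (fun j => |v j|) with hwdef
  have hww_vv : ⟪w, w⟫ = ⟪v', v'⟫ := by
    rw [hinner, hinner]
    exact Finset.sum_congr rfl fun j _ => abs_mul_abs_self (v j)
  have hvTv : ⟪v', T1 v'⟫ = -lam * ⟪v', v'⟫ := by
    have : T1 v' = (-lam) • v' := congrArg (WithLp.toLp 2) hAv
    rw [this, real_inner_smul_right]
  have hge : -lam * ⟪w, w⟫ ≤ ⟪w, T1 w⟫ := by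
    rw [inner_form]
    have hcmp : ∑ j, ∑ n, v j * (A j n * v n) ≤ ∑ j, ∑ n, w j * (A j n * w n) := by
      refine Finset.sum_le_sum fun j _ => Finset.sum_le_sum fun n _ => ?_
      by_cases h : j = n
      · subst h
        have heq2 : w j * (A j j * w j) = v j * (A j j * v j) := by
          show |v j| * (A j j * |v j|) = v j * (A j j * v j)
          calc |v j| * (A j j * |v j|) = (|v j| * |v j|) * A j j := by ring
            _ = (v j * v j) * A j j := by rw [abs_mul_abs_self]
            _ = v j * (A j j * v j) := by ring
        linarith [heq2.ge]
      · have hg : 0 ≤ A j n := by rw [hAapp, if_neg h]; simpa using hoff j n h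
        have habs : v j * v n ≤ w j * w n := by
          show v j * v n ≤ |v j| * |v n|
          calc v j * v n ≤ |v j * v n| := le_abs_self _
            _ = |v j| * |v n| := abs_mul _ _
        nlinarith
    have hveq : ∑ j, ∑ n, v j * (A j n * v n) = -lam * ⟪w, w⟫ := by
      rw [hww_vv, ← hvTv, inner_form]
    linarith
  have hle : ⟪w, T1 w⟫ ≤ -lam * ⟪w, w⟫ := aux_rayleigh_le T1 hT1sym (-lam) htop1 w
  have hweig : T1 w = (-lam) • w :=
    aux_rayleigh_eq T1 hT1sym (-lam) htop1 w (le_antisymm hle hge)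
  have hw_eq : ∀ j, ∑ n, Γ j n * w n = Λ j * w j - lam * w j := by
    intro j
    have hj : ∑ n, A j n * w n = -lam * w j := by
      have := congrArg (fun u : EuclideanSpace ℝ (Fin N) => u j) hweig
      rw [hT1app] at this
      exact this
    have hsplit : ∑ n, A j n * w n = (∑ n, Γ j n * w n) - Λ j * w j := by
      have e0 : ∑ n, A j n * w n
          = ∑ n, (Γ j n * w n - (if j = n then Λ j * w n else 0)) := by
        refine Finset.sum_congr rfl fun n _ => ?_
        rw [hAapp j n]; split_ifs <;> ring
      rw [e0, Finset.sum_sub_distrib, Finset.sum_ite_eq]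
      simp
    rw [hsplit] at hj
    linarith
  have hwpos : ∀ j, 0 ≤ w j := fun j => abs_nonneg _
  have hw0 : w ≠ 0 := by
    intro h
    apply hv0
    funext j
    have := congrArg (fun u : EuclideanSpace ℝ (Fin N) => u j) h
    have : |v j| = 0 := this
    simpa [abs_eq_zero] using this
  
  -- ## Part II: the second-moment operator
  set ee : Fin N → Fin N → ℝ := fun j l => if j = l then Real.sqrt 2 else 1 with heedef
  have heepos : ∀ j l, 0 < ee j l := by
    intro j l
    show (0:ℝ) < if j = l then Real.sqrt 2 else 1
    split_ifs
    · exact Real.sqrt_pos.mpr (by norm_num)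
    · norm_num
  have heene : ∀ j l, ee j l ≠ 0 := fun j l => ne_of_gt (heepos j l)
  have heesym : ∀ j l, ee j l = ee l j := by
    intro j l
    show (if j = l then Real.sqrt 2 else 1) = (if l = j then Real.sqrt 2 else 1)
    by_cases h : j = l
    · subst h; rfl
    · rw [if_neg h, if_neg (Ne.symm h)]
  have hee2 : ∀ j l, ee j l * ee j l = (if j = l then (2:ℝ) else 1) := by
    intro j l
    show (if j = l then Real.sqrt 2 else 1) * (if j = l then Real.sqrt 2 else 1) = _
    split_ifs
    · exact Real.mul_self_sqrt (by norm_num)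
    · norm_num
  set SY : (EuclideanSpace ℝ (Fin N × Fin N)) → Fin N → Fin N → ℝ :=
    fun y j l => (y (j, l) + y (l, j)) / (2 * ee j l) with hSYdef
  have hSYsym : ∀ y, ∀ j l : Fin N, SY y j l = SY y l j := by
    intro y j l
    show (y (j, l) + y (l, j)) / (2 * ee j l) = (y (l, j) + y (j, l)) / (2 * ee l j)
    rw [← heesym j l, add_comm]
  have hhalf : ∀ (z : EuclideanSpace ℝ (Fin N × Fin N)) (j l : Fin N),
      (z (j, l) + z (l, j)) / 2 = ee j l * SY z j l := by
    intro z j l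
    show _ = ee j l * ((z (j, l) + z (l, j)) / (2 * ee j l))
    field_simp
    linear_combination (-(z (j, l) + z (l, j))) * mul_inv_cancel₀ (heene j l)
  set T2 : EuclideanSpace ℝ (Fin N × Fin N) →ₗ[ℝ] EuclideanSpace ℝ (Fin N × Fin N) :=
    { toFun := fun y => WithLp.toLp 2 (fun p => ee p.1 p.2 * (Theta Γ (SY y) p.1 p.2 - Psi Λ (SY y) p.1 p.2)
        + (-mu) * (y p - (y p + y (p.2, p.1)) / 2))
      map_add' := fun y z => PiLp.ext fun p => by
        have h1 : SY (y + z) = fun m n => 1 * SY y m n + 1 * SY z m n := by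
          funext m n
          show ((y + z) (m, n) + (y + z) (n, m)) / (2 * ee m n) = _
          have ha : (y + z) (m, n) = y (m, n) + z (m, n) := rfl
          have hb : (y + z) (n, m) = y (n, m) + z (n, m) := rfl
          rw [ha, hb]
          show _ = 1 * ((y (m, n) + y (n, m)) / (2 * ee m n))
            + 1 * ((z (m, n) + z (n, m)) / (2 * ee m n))
          ring
        show ee p.1 p.2 * (Theta Γ (SY (y + z)) p.1 p.2 - Psi Λ (SY (y + z)) p.1 p.2)
              + (-mu) * ((y + z) p - ((y + z) p + (y + z) (p.2, p.1)) / 2)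
            = (ee p.1 p.2 * (Theta Γ (SY y) p.1 p.2 - Psi Λ (SY y) p.1 p.2)
              + (-mu) * (y p - (y p + y (p.2, p.1)) / 2))
              + (ee p.1 p.2 * (Theta Γ (SY z) p.1 p.2 - Psi Λ (SY z) p.1 p.2)
              + (-mu) * (z p - (z p + z (p.2, p.1)) / 2))
        rw [h1, opB_linear hsym]
        have ha : (y + z) p = y p + z p := rfl
        have hb : (y + z) (p.2, p.1) = y (p.2, p.1) + z (p.2, p.1) := rfl
        rw [ha, hb]
        ring
      map_smul' := fun c y => PiLp.ext fun p => by
        have h1 : SY (c • y) = fun m n => c * SY y m n + 0 * SY y m n := by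
          funext m n
          show ((c • y) (m, n) + (c • y) (n, m)) / (2 * ee m n) = _
          have ha : (c • y) (m, n) = c * y (m, n) := rfl
          have hb : (c • y) (n, m) = c * y (n, m) := rfl
          rw [ha, hb]
          show _ = c * ((y (m, n) + y (n, m)) / (2 * ee m n))
            + 0 * ((y (m, n) + y (n, m)) / (2 * ee m n))
          ring
        show ee p.1 p.2 * (Theta Γ (SY (c • y)) p.1 p.2 - Psi Λ (SY (c • y)) p.1 p.2)
              + (-mu) * ((c • y) p - ((c • y) p + (c • y) (p.2, p.1)) / 2)
            = c * (ee p.1 p.2 * (Theta Γ (SY y) p.1 p.2 - Psi Λ (SY y) p.1 p.2)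
              + (-mu) * (y p - (y p + y (p.2, p.1)) / 2))
        rw [h1, opB_linear hsym]
        have ha : (c • y) p = c * y p := rfl
        have hb : (c • y) (p.2, p.1) = c * y (p.2, p.1) := rfl
        rw [ha, hb]
        ring } with hT2def
  have hT2app : ∀ (y : EuclideanSpace ℝ (Fin N × Fin N)) (j l : Fin N),
      T2 y (j, l) = ee j l * (Theta Γ (SY y) j l - Psi Λ (SY y) j l)
        + (-mu) * (y (j, l) - (y (j, l) + y (l, j)) / 2) := fun y j l => rfl
  have hinner2 : ∀ u z : EuclideanSpace ℝ (Fin N × Fin N),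
      ⟪u, z⟫ = ∑ j, ∑ l, u (j, l) * z (j, l) := by
    intro u z
    rw [PiLp.inner_apply]
    simp only [RCLike.inner_apply, conj_trivial]
    rw [Fintype.sum_prod_type]
    exact Finset.sum_congr rfl fun j _ => Finset.sum_congr rfl fun l _ => mul_comm _ _
  have hDsym : ∀ (y : EuclideanSpace ℝ (Fin N × Fin N)) (j l : Fin N),
      ee j l * (Theta Γ (SY y) j l - Psi Λ (SY y) j l)
        = ee l j * (Theta Γ (SY y) l j - Psi Λ (SY y) l j) := by
    intro y j l
    rw [opB_symm hsym Λ (SY y) (hSYsym y) j l, heesym j l]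
  have hT2sym : T2.IsSymmetric := by
    intro y z
    rw [hinner2, hinner2]
    have eL : ∀ j l : Fin N, (T2 y) (j, l) * z (j, l)
        = (ee j l * (Theta Γ (SY y) j l - Psi Λ (SY y) j l)) * z (j, l)
          + (-mu) * (y (j, l) * z (j, l) - ((y (j, l) + y (l, j)) / 2) * z (j, l)) := by
      intro j l; rw [hT2app]; ring
    have eR : ∀ j l : Fin N, y (j, l) * (T2 z) (j, l)
        = y (j, l) * (ee j l * (Theta Γ (SY z) j l - Psi Λ (SY z) j l))
          + (-mu) * (y (j, l) * z (j, l) - y (j, l) * ((z (j, l) + z (l, j)) / 2)) := by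
      intro j l; rw [hT2app]; ring
    have hL : ∑ j, ∑ l, (T2 y) (j, l) * z (j, l)
        = (∑ j, ∑ l, (ee j l * (Theta Γ (SY y) j l - Psi Λ (SY y) j l)) * z (j, l))
          + (-mu) * ((∑ j, ∑ l, y (j, l) * z (j, l))
            - ∑ j, ∑ l, ((y (j, l) + y (l, j)) / 2) * z (j, l)) := by
      rw [Finset.sum_congr rfl fun j _ => Finset.sum_congr rfl fun l _ => eL j l]
      exact split3 _ _ _ (-mu)
    have hR : ∑ j, ∑ l, y (j, l) * (T2 z) (j, l)
        = (∑ j, ∑ l, y (j, l) * (ee j l * (Theta Γ (SY z) j l - Psi Λ (SY z) j l)))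
          + (-mu) * ((∑ j, ∑ l, y (j, l) * z (j, l))
            - ∑ j, ∑ l, y (j, l) * ((z (j, l) + z (l, j)) / 2)) := by
      rw [Finset.sum_congr rfl fun j _ => Finset.sum_congr rfl fun l _ => eR j l]
      exact split3 _ _ _ (-mu)
    rw [hL, hR, cross_sym y z]
    congr 1
    -- main step: the weighted self-adjointness
    calc ∑ j, ∑ l, (ee j l * (Theta Γ (SY y) j l - Psi Λ (SY y) j l)) * z (j, l)
        = ∑ j, ∑ l, (ee j l * (Theta Γ (SY y) j l - Psi Λ (SY y) j l))
            * ((z (j, l) + z (l, j)) / 2) :=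
          pair_symm _ (fun j l => hDsym y j l) z
      _ = ∑ j, ∑ l, (if j = l then (2:ℝ) else 1)
            * (SY z j l * (Theta Γ (SY y) j l - Psi Λ (SY y) j l)) := by
          refine Finset.sum_congr rfl fun j _ => Finset.sum_congr rfl fun l _ => ?_
          rw [hhalf z j l, ← hee2 j l]
          ring
      _ = ∑ j, ∑ l, (if j = l then (2:ℝ) else 1)
            * (SY y j l * (Theta Γ (SY z) j l - Psi Λ (SY z) j l)) :=
          key_opB hsym hrow0 Λ (SY y) (SY z) (hSYsym y) (hSYsym z)
      _ = ∑ j, ∑ l, (ee j l * (Theta Γ (SY z) j l - Psi Λ (SY z) j l))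
            * ((y (j, l) + y (l, j)) / 2) := by
          refine Finset.sum_congr rfl fun j _ => Finset.sum_congr rfl fun l _ => ?_
          rw [hhalf y j l, ← hee2 j l]
          ring
      _ = ∑ j, ∑ l, y (j, l) * (ee j l * (Theta Γ (SY z) j l - Psi Λ (SY z) j l)) := by
          have h1 := pair_symm (fun j l => ee j l * (Theta Γ (SY z) j l - Psi Λ (SY z) j l))
            (fun j l => hDsym z j l) y
          rw [← h1]
          exact Finset.sum_congr rfl fun j _ => Finset.sum_congr rfl fun l _ => by ring
  have htop2 : ∀ (r : ℝ) (y : EuclideanSpace ℝ (Fin N × Fin N)),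
      y ≠ 0 → T2 y = r • y → r ≤ -mu := by
    intro r y hy0 heig
    have hpt : ∀ j l : Fin N,
        ee j l * (Theta Γ (SY y) j l - Psi Λ (SY y) j l)
          + (-mu) * (y (j, l) - (y (j, l) + y (l, j)) / 2) = r * y (j, l) := by
      intro j l
      have := congrArg (fun u : EuclideanSpace ℝ (Fin N × Fin N) => u (j, l)) heig
      rw [hT2app] at this
      exact this
    by_cases hS0 : SY y = 0
    · -- antisymmetric case: r = -mu
      have hy2 : ∀ j l : Fin N, y (j, l) + y (l, j) = 0 := by
        intro j l
        have h := congrFun (congrFun hS0 j) l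
        have h2 : (y (j, l) + y (l, j)) / (2 * ee j l) = 0 := h
        have h3 : (2 : ℝ) * ee j l ≠ 0 := by
          have := heene j l; positivity
        field_simp at h2
        rw [mul_zero, div_eq_zero_iff] at h2
        exact h2.resolve_right (heene j l)
      obtain ⟨p, hp⟩ : ∃ p, y p ≠ 0 := by
        by_contra h
        push_neg at h
        exact hy0 (PiLp.ext fun p => h p)
      have h := hpt p.1 p.2
      rw [hS0] at h
      have hz : Theta Γ (fun _ _ => (0:ℝ)) p.1 p.2 - Psi Λ (fun _ _ => (0:ℝ)) p.1 p.2 = 0 := by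
        simp [Theta, Psi]
      have hzz : Theta Γ 0 p.1 p.2 - Psi Λ 0 p.1 p.2 = 0 := hz
      rw [hzz, mul_zero, zero_add] at h
      have h4 : y (p.1, p.2) + y (p.2, p.1) = 0 := hy2 p.1 p.2
      have hp' : y (p.1, p.2) ≠ 0 := by
        have : p = (p.1, p.2) := rfl
        rw [← this]; exact hp
      have h5 : (-mu) * y (p.1, p.2) = r * y (p.1, p.2) := by
        have h6 : y (p.1, p.2) - (y (p.1, p.2) + y (p.2, p.1)) / 2 = y (p.1, p.2) := by
          rw [h4]; ring
        calc (-mu) * y (p.1, p.2) = (-mu) * (y (p.1, p.2) - (y (p.1, p.2) + y (p.2, p.1)) / 2) := by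
              rw [h6]
          _ = r * y (p.1, p.2) := h
      have := mul_right_cancel₀ hp' h5
      linarith [this.le]
    · -- symmetric case: SY y is an eigenvector of Θ - Ψ
      refine hmu_top r ⟨SY y, hS0, hSYsym y, funext fun j => funext fun l => ?_⟩
      have hD : ee j l * (Theta Γ (SY y) j l - Psi Λ (SY y) j l)
          = r * ((y (j, l) + y (l, j)) / 2) := by
        have h1 := hpt j l
        have h2 := hpt l j
        rw [← hDsym y j l] at h2
        have h3 : (y (l, j) + y (j, l)) = (y (j, l) + y (l, j)) := by ring
        rw [h3] at h2
        linarith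
      rw [hhalf y j l] at hD
      have : Theta Γ (SY y) j l - Psi Λ (SY y) j l = r * SY y j l := by
        have h4 : ee j l * (Theta Γ (SY y) j l - Psi Λ (SY y) j l)
            = ee j l * (r * SY y j l) := by rw [hD]; ring
        exact mul_left_cancel₀ (heene j l) h4
      exact this
  -- ## Part III: conclusion via the Rayleigh quotient at w ⊗ w
  set x : EuclideanSpace ℝ (Fin N × Fin N) := WithLp.toLp 2 (fun p => ee p.1 p.2 * (w p.1 * w p.2)) with hxdef
  obtain ⟨j0, hj0⟩ : ∃ j, w j ≠ 0 := by
    by_contra h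
    push_neg at h
    exact hw0 (PiLp.ext fun j => h j)
  have hx0 : x ≠ 0 := by
    intro h
    have h1 : x (j0, j0) = 0 := congrArg (fun u : EuclideanSpace ℝ (Fin N × Fin N) => u (j0, j0)) h
    have h2 : x (j0, j0) = ee j0 j0 * (w j0 * w j0) := rfl
    rw [h2] at h1
    rcases mul_eq_zero.mp h1 with h3 | h3
    · exact heene j0 j0 h3
    · rcases mul_eq_zero.mp h3 with h4 | h4 <;> exact hj0 h4
  have hSYx : ∀ m n : Fin N, SY x m n = w m * w n := by
    intro m n
    show (x (m, n) + x (n, m)) / (2 * ee m n) = w m * w n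
    have h1 : x (m, n) = ee m n * (w m * w n) := rfl
    have h2 : x (n, m) = ee n m * (w n * w m) := rfl
    rw [h1, h2, ← heesym m n]
    field_simp
    linear_combination (w m * w n * 2) * mul_inv_cancel₀ (heene m n)
  have hT2x : ∀ j l : Fin N, T2 x (j, l)
      = ee j l * (-(2*lam) * (w j * w l) + Γ j l * (w j - w l)^2) := by
    intro j l
    rw [hT2app]
    rw [supersol hsym hrow0 Λ lam w hw_eq (SY x) hSYx j l]
    have h1 : x (j, l) = ee j l * (w j * w l) := rfl
    have h2 : x (l, j) = ee l j * (w l * w j) := rfl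
    rw [h1, h2, ← heesym j l]
    ring
  have hray_ge : -(2*lam) * ⟪x, x⟫ ≤ ⟪x, T2 x⟫ := by
    rw [hinner2, hinner2, Finset.mul_sum]
    rw [Finset.sum_congr rfl fun j (_ : j ∈ Finset.univ) => Finset.mul_sum _ _ _]
    refine Finset.sum_le_sum fun j _ => Finset.sum_le_sum fun l _ => ?_
    rw [hT2x j l]
    have h1 : x (j, l) = ee j l * (w j * w l) := rfl
    rw [h1]
    have hnn : 0 ≤ Γ j l * (w j - w l)^2 := by
      by_cases h : j = l
      · subst h; simp
      · exact mul_nonneg (hoff j l h) (sq_nonneg _)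
    have hkey : (ee j l * (w j * w l)) * (ee j l * (-(2*lam) * (w j * w l) + Γ j l * (w j - w l)^2))
        = -(2*lam) * ((ee j l * (w j * w l)) * (ee j l * (w j * w l)))
          + (ee j l * ee j l) * (w j * w l) * (Γ j l * (w j - w l)^2) := by ring
    rw [hkey]
    have hpos : 0 ≤ (ee j l * ee j l) * (w j * w l) * (Γ j l * (w j - w l)^2) :=
      mul_nonneg (mul_nonneg (mul_nonneg (le_of_lt (heepos j l)) (le_of_lt (heepos j l)))
        (mul_nonneg (hwpos j) (hwpos l))) hnn
    linarith
  have hray_le : ⟪x, T2 x⟫ ≤ -mu * ⟪x, x⟫ := aux_rayleigh_le T2 hT2sym (-mu) htop2 x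
  have hxx : 0 < ⟪x, x⟫ := by
    rcases lt_or_eq_of_le (real_inner_self_nonneg (x := x)) with h | h
    · exact h
    · exact absurd (inner_self_eq_zero.mp h.symm) hx0
  have hfin : -(2*lam) * ⟪x, x⟫ ≤ -mu * ⟪x, x⟫ := le_trans hray_ge hray_le
  have := (mul_le_mul_iff_of_pos_right hxx).mp (by linarith : (-(2*lam)) * ⟪x, x⟫ ≤ (-mu) * ⟪x, x⟫)
  linarith
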